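/- arXiv:1208.0350 — 3 statements merged into one kernel-verified Lean document; each statement's English description precedes it below -/
import Mathlib

section
/- Let g be a finite dimensional Lie algebra over a field k, M a finite dimensional g-module, and σ ∈ g such that g is spanned by eigenvectors of ad σ with eigenvalues in k. If F is an n-cocycle of g with coefficients in M (i.e., δF = 0) which is homogeneous of degree r ∈ k with respect to σ and r ≠ 0, then F is a coboundary; explicitly, F = δ(r^{−1} · ι_σ F). -/
variable {k L M : Type*}

section

variable [CommRing k] [LieRing L] [LieAlgebra k L]
  [AddCommGroup M] [Module k M] [LieRingModule L M] [LieModule k L M]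

/-- The Chevalley–Eilenberg coboundary of an `n`-cochain (given as a function on `n`-tuples):
`(δF)(a₀,…,aₙ) = ∑ᵢ (−1)ⁱ ⁅aᵢ, F(…,âᵢ,…)⁆
  + ∑_{i<j} (−1)^{i+j} F(⁅aᵢ,aⱼ⁆, a₀,…,âᵢ,…,âⱼ,…,aₙ)`.
In the second sum, the pair `i < j` is encoded as `(i, i.succAbove j)` with `(i : ℕ) ≤ (j : ℕ)`,
so that the actual second index is `j + 1` and the sign is `(−1)^{i+j+1}`. -/
def ceCoboundary : ∀ {n : ℕ}, ((Fin n → L) → M) → (Fin (n + 1) → L) → M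
  | 0, F => fun a => ⁅a 0, F Fin.elim0⁆
  | m + 1, F => fun a =>
      (∑ i : Fin (m + 2), ((-1 : ℤ) ^ (i : ℕ)) • ⁅a i, F (a ∘ i.succAbove)⁆) +
      ∑ i : Fin (m + 2), ∑ j : Fin (m + 1),
        if (i : ℕ) ≤ (j : ℕ) then
          ((-1 : ℤ) ^ ((i : ℕ) + (j : ℕ) + 1)) •
            F (Fin.cons ⁅a i, a (i.succAbove j)⁆ ((a ∘ i.succAbove) ∘ j.succAbove))
        else 0

/-- Contraction `ι_σ F` of a cochain `F` with an element `σ` in the first slot. -/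
def ceContract {n : ℕ} (σ : L) (F : (Fin (n + 1) → L) → M) : (Fin n → L) → M :=
  fun v => F (Fin.cons σ v)

/-- An `n`-cochain `F` is homogeneous of degree `r` with respect to `σ` if whenever
`⁅σ, aᵢ⁆ = λᵢ • aᵢ` for all `i`, one has `⁅σ, F(a₁,…,aₙ)⁆ = (λ₁ + ⋯ + λₙ + r) • F(a₁,…,aₙ)`. -/
def IsHomogeneousOfDegree (σ : L) (r : k) {n : ℕ} (F : (Fin n → L) → M) : Prop :=
  ∀ (a : Fin n → L) (lam : Fin n → k),
    (∀ i, ⁅σ, a i⁆ = lam i • a i) → ⁅σ, F a⁆ = ((∑ i, lam i) + r) • F a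

end


section

variable [CommRing k] [LieRing L] [LieAlgebra k L]
  [AddCommGroup M] [Module k M] [LieRingModule L M] [LieModule k L M]

variable {N : Type*} [AddCommGroup N] [Module k N]

lemma cons_comp_succ_succAbove {α : Type*} {m : ℕ} (σ : α) (v : Fin (m + 1) → α) (i : Fin (m + 1)) :
    (Fin.cons σ v) ∘ (i.succ).succAbove = Fin.cons σ (v ∘ i.succAbove) := by
  funext j
  cases j using Fin.cases with
  | zero => simp
  | succ j => simp [Fin.succ_succAbove_succ]

lemma cons_comp_succ {α : Type*} {m : ℕ} (σ : α) (v : Fin m → α) :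
    (Fin.cons σ v) ∘ Fin.succ = v := by
  funext j; simp

lemma map_cons_succAbove {m : ℕ} (F : AlternatingMap k L N (Fin (m + 1))) (a : Fin (m + 1) → L)
    (j : Fin (m + 1)) (x : L) :
    F (Fin.cons x (a ∘ j.succAbove)) = ((-1 : ℤ) ^ (j : ℕ)) • F (Function.update a j x) := by
  have h : Fin.cons x (a ∘ j.succAbove) = (Function.update a j x) ∘ ⇑(j.cycleRange.symm) := by
    funext t
    cases t using Fin.cases with
    | zero => rw [Function.comp_apply, Fin.cycleRange_symm_zero, Function.update_self,
        Fin.cons_zero]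
    | succ t => rw [Function.comp_apply, Fin.cycleRange_symm_succ,
        Function.update_of_ne (Fin.succAbove_ne j t), Fin.cons_succ, Function.comp_apply]
  rw [h, F.map_perm, Equiv.Perm.sign_symm, Fin.sign_cycleRange, Units.smul_def]
  norm_cast

lemma map_cons_cons_swap {m : ℕ} (F : AlternatingMap k L N (Fin (m + 2))) (x y : L)
    (w : Fin m → L) :
    F (Fin.cons x (Fin.cons y w)) = - F (Fin.cons y (Fin.cons x w)) := by
  have h01 : ((0 : Fin (m + 1)).succ : Fin (m + 2)) = 1 := rfl
  have h : Fin.cons x (Fin.cons y w) =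
      (Fin.cons y (Fin.cons x w)) ∘ Equiv.swap (0 : Fin (m + 2)) 1 := by
    funext t
    cases t using Fin.cases with
    | zero =>
        rw [Function.comp_apply, Equiv.swap_apply_left, Fin.cons_zero, ← h01, Fin.cons_succ,
          Fin.cons_zero]
    | succ s =>
      cases s using Fin.cases with
      | zero =>
          rw [Function.comp_apply, Fin.cons_succ, Fin.cons_zero, h01, Equiv.swap_apply_right,
            Fin.cons_zero]
      | succ s =>
          rw [Function.comp_apply,
            Equiv.swap_apply_of_ne_of_ne (Fin.succ_ne_zero _) (by simp [Fin.ext_iff]),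
            Fin.cons_succ, Fin.cons_succ, Fin.cons_succ, Fin.cons_succ]
  rw [h]
  exact F.map_swap _ (fun hh => absurd (congrArg Fin.val hh) (by simp))

lemma cartan {n : ℕ} (F : AlternatingMap k L M (Fin (n + 1))) (σ : L) (a : Fin (n + 1) → L) :
    ceCoboundary (⇑F) (Fin.cons σ a) =
      (⁅σ, F a⁆ - ∑ j, F (Function.update a j ⁅σ, a j⁆)) - ceCoboundary (ceContract σ ⇑F) a := by
  cases n with
  | zero =>
      simp only [ceCoboundary, ceContract, Fin.sum_univ_two, Fin.sum_univ_one,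
        Fin.val_zero, Fin.val_one, pow_zero, pow_one, one_smul, neg_smul,
        Fin.cons_zero, Fin.cons_succ, Fin.isValue, Nat.reduceAdd, Fin.sum_univ_two,
        Fin.sum_univ_one]
      rw [if_pos le_rfl, if_neg (by omega)]
      have h1 : (Fin.cons σ a ∘ Fin.succAbove 0 : Fin (0+1) → L) = a := by
        funext j; rw [Fin.fin_one_eq_zero j]; rfl
      have h2 : (Fin.cons σ a ∘ Fin.succAbove 1 : Fin (0+1) → L) = Fin.cons σ Fin.elim0 := by
        funext j; rw [Fin.fin_one_eq_zero j]; rfl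
      have h3 : (Fin.cons ⁅σ, (Fin.cons σ a : Fin (0+2) → L) (Fin.succAbove 0 0)⁆
          (((Fin.cons σ a : Fin (0+2) → L) ∘ Fin.succAbove 0) ∘ Fin.succAbove 0) : Fin (0+1) → L)
          = Function.update a 0 ⁅σ, a 0⁆ := by
        funext j; rw [Fin.fin_one_eq_zero j]; rfl
      have h4 : ((Fin.cons σ a : Fin (0+2) → L) 1 : L) = a 0 := rfl
      rw [h3, h1, h2, h4]
      abel
  | succ m =>
      have e1 : (∑ i : Fin (m + 1 + 2), ((-1 : ℤ)) ^ (i : ℕ) •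
            ⁅(Fin.cons σ a : Fin (m + 1 + 2) → L) i, F ((Fin.cons σ a : Fin (m + 1 + 2) → L) ∘ i.succAbove)⁆)
          = ⁅σ, F a⁆ - ∑ i : Fin (m + 2), ((-1 : ℤ)) ^ (i : ℕ) •
            ⁅a i, F (Fin.cons σ (a ∘ i.succAbove))⁆ := by
        rw [Fin.sum_univ_succ, sub_eq_add_neg, ← Finset.sum_neg_distrib]
        congr 1
        · rw [Fin.cons_zero, Fin.val_zero, pow_zero, one_smul, Fin.succAbove_zero,
            cons_comp_succ]
        · refine Finset.sum_congr rfl fun i _ => ?_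
          rw [Fin.cons_succ, cons_comp_succ_succAbove, Fin.val_succ, pow_succ]
          rw [mul_comm, mul_smul, neg_one_smul]
      have e2 : (∑ i : Fin (m + 1 + 2), ∑ j : Fin (m + 1 + 1),
            if (i : ℕ) ≤ (j : ℕ) then ((-1 : ℤ)) ^ ((i : ℕ) + (j : ℕ) + 1) •
              F (Fin.cons ⁅(Fin.cons σ a : Fin (m + 1 + 2) → L) i, (Fin.cons σ a : Fin (m + 1 + 2) → L) (i.succAbove j)⁆
                (((Fin.cons σ a : Fin (m + 1 + 2) → L) ∘ i.succAbove) ∘ j.succAbove))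
            else 0)
          = - (∑ j : Fin (m + 1 + 1), F (Function.update a j ⁅σ, a j⁆))
            - ∑ i : Fin (m + 2), ∑ j : Fin (m + 1),
              if (i : ℕ) ≤ (j : ℕ) then ((-1 : ℤ)) ^ ((i : ℕ) + (j : ℕ) + 1) •
                F (Fin.cons σ (Fin.cons ⁅a i, a (i.succAbove j)⁆
                  ((a ∘ i.succAbove) ∘ j.succAbove)))
              else 0 := by
        rw [Fin.sum_univ_succ, sub_eq_add_neg, ← Finset.sum_neg_distrib,
          ← Finset.sum_neg_distrib]
        congr 1
        · -- i = 0 part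
          refine Finset.sum_congr rfl fun j _ => ?_
          rw [Fin.val_zero, if_pos (Nat.zero_le _), Fin.cons_zero, Fin.zero_succAbove,
            Fin.cons_succ, Fin.succAbove_zero, cons_comp_succ, map_cons_succAbove,
            smul_smul, zero_add]
          have hs : ((-1 : ℤ)) ^ ((j : ℕ) + 1) * ((-1 : ℤ)) ^ (j : ℕ) = -1 := by
            rw [← pow_add]
            simpa using Odd.neg_one_pow (R := ℤ) ⟨(j : ℕ), by ring⟩
          rw [hs, neg_one_smul]
        · -- i = i' + 1 part
          refine Finset.sum_congr rfl fun i _ => ?_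
          rw [Fin.sum_univ_succ]
          have hc0 : ¬ (((i.succ : Fin (m + 1 + 2)) : ℕ) ≤ (((0 : Fin (m + 1 + 1))) : ℕ)) := by
            simp
          rw [if_neg hc0, zero_add]
          rw [← Finset.sum_neg_distrib]
          refine Finset.sum_congr rfl fun j _ => ?_
          rw [Fin.succ_succAbove_succ, Fin.cons_succ, Fin.cons_succ,
            cons_comp_succ_succAbove, cons_comp_succ_succAbove, map_cons_cons_swap]
          by_cases h : (i : ℕ) ≤ (j : ℕ)
          · have hc1 : (((i.succ : Fin (m + 1 + 2))) : ℕ) ≤ ((j.succ : Fin (m + 1 + 1)) : ℕ) := by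
              simpa using h
            rw [if_pos hc1, if_pos h, Fin.val_succ, Fin.val_succ]
            have hs : ((-1 : ℤ)) ^ (((i : ℕ) + 1) + ((j : ℕ) + 1) + 1)
                = ((-1 : ℤ)) ^ ((i : ℕ) + (j : ℕ) + 1) := by
              rw [show ((i : ℕ) + 1) + ((j : ℕ) + 1) + 1 = ((i : ℕ) + (j : ℕ) + 1) + 2 by ring,
                pow_add]
              ring
            rw [hs, smul_neg]
          · have hc1 : ¬ (((i.succ : Fin (m + 1 + 2))) : ℕ) ≤ ((j.succ : Fin (m + 1 + 1)) : ℕ) := by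
              simpa using h
            rw [if_neg hc1, if_neg h, neg_zero]
      simp only [ceCoboundary, ceContract]
      rw [e1, e2]
      abel


lemma ceCoboundary_smul {n : ℕ} (c : k) (G : (Fin n → L) → M) :
    ceCoboundary (c • G) = c • ceCoboundary G := by
  cases n with
  | zero =>
      funext a
      simp only [ceCoboundary, Pi.smul_apply, lie_smul]
  | succ m =>
      funext a
      simp only [ceCoboundary, Pi.smul_apply, lie_smul, smul_add, Finset.smul_sum,
        smul_ite, smul_zero, smul_comm c]

end

/-- Theorem 1(1): a homogeneous cocycle of degree `r ≠ 0` is the coboundary of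
`r⁻¹ • ι_σ F`. -/
theorem stmt3 [Field k] [LieRing L] [LieAlgebra k L]
    [AddCommGroup M] [Module k M] [LieRingModule L M] [LieModule k L M]
    [FiniteDimensional k L] [FiniteDimensional k M]
    (σ : L)
    (hL : Submodule.span k {y : L | ∃ c : k, ⁅σ, y⁆ = c • y} = ⊤)
    {n : ℕ} (F : AlternatingMap k L M (Fin (n + 1))) (r : k) (hr : r ≠ 0)
    (hF : IsHomogeneousOfDegree σ r ⇑F)
    (hcocycle : ceCoboundary ⇑F = 0) :
    ⇑F = ceCoboundary (r⁻¹ • ceContract σ ⇑F) := by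
  classical
  obtain ⟨s, hs_sub, hs_span, hs_li⟩ :=
    exists_linearIndependent k {y : L | ∃ c : k, ⁅σ, y⁆ = c • y}
  rw [hL] at hs_span
  let b : Module.Basis s k L := Module.Basis.mk hs_li (by rw [Subtype.range_coe]; exact hs_span.ge)
  have hb : ∀ y : s, b y = (y : L) := fun y => Module.Basis.mk_apply _ _ _
  choose lam hlam using fun y : s => hs_sub y.2
  set T : MultilinearMap k (fun _ : Fin (n + 1) => L) M :=
    ((LieModule.toEnd k L M σ).compMultilinearMap F.toMultilinearMap) -
      ∑ i : Fin (n + 1), F.toMultilinearMap.compLinearMap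
        (Function.update (fun _ : Fin (n + 1) => (LinearMap.id : L →ₗ[k] L)) i
          (LieModule.toEnd k L L σ)) with hTdef
  have hT : ∀ a : Fin (n + 1) → L,
      T a = ⁅σ, F a⁆ - ∑ i, F (Function.update a i ⁅σ, a i⁆) := by
    intro a
    rw [hTdef]
    rw [MultilinearMap.sub_apply, MultilinearMap.sum_apply]
    congr 1
    refine Finset.sum_congr rfl fun i _ => ?_
    have harg : (fun j => (Function.update (fun _ : Fin (n + 1) => (LinearMap.id : L →ₗ[k] L)) i
        (LieModule.toEnd k L L σ) j) (a j)) = Function.update a i ⁅σ, a i⁆ := by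
      funext j
      rcases eq_or_ne j i with rfl | hji
      · simp [LieModule.toEnd_apply_apply]
      · simp [Function.update_of_ne hji]
    exact congrArg _ harg
  have hTr : T = r • F.toMultilinearMap := by
    apply Module.Basis.ext_multilinear (fun _ => b)
    intro v
    have h1 := hF (fun i => b (v i)) (fun i => lam (v i)) (by
      intro i
      simp only [hb]
      exact hlam (v i))
    have h2 : ∀ i : Fin (n + 1), F (Function.update (fun i => b (v i)) i ⁅σ, b (v i)⁆)
        = lam (v i) • F (fun i => b (v i)) := by
      intro i
      rw [hb, hlam (v i), ← hb, AlternatingMap.map_update_smul, Function.update_eq_self]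
    rw [hT, h1, MultilinearMap.smul_apply]
    simp only [h2]
    rw [add_smul, Finset.sum_smul]
    simp only [AlternatingMap.coe_multilinearMap]
    abel
  funext a
  have hc := cartan F σ a
  rw [hcocycle] at hc
  simp only [Pi.zero_apply] at hc
  have hTa : T a = r • F a := by
    rw [hTr, MultilinearMap.smul_apply, AlternatingMap.coe_multilinearMap]
  have hGa : ceCoboundary (ceContract σ ⇑F) a = r • F a := by
    rw [← hTa, hT a]
    exact (sub_eq_zero.mp hc.symm).symm
  rw [ceCoboundary_smul, Pi.smul_apply, hGa, inv_smul_smul₀ hr]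
end

section
/- Let g be a finite dimensional Lie algebra over a field k, M a finite dimensional g-module, and σ ∈ g such that g is spanned by eigenvectors of ad σ with eigenvalues in k. If F is a 1-cocycle of g with coefficients in M which is homogeneous of degree 0 with respect to σ, then F(σ) lies in the invariants M^g, i.e., a · F(σ) = 0 for every a ∈ g. -/
/- STATEMENT 6: for a 1-cocycle `F` homogeneous of degree `0` with respect to an
ad-semisimple element `σ`, the value `F(σ)` lies in the invariants `M^g`. -/

theorem stmt6 {k L M : Type*} [Field k] [LieRing L] [LieAlgebra k L]
    [AddCommGroup M] [Module k M] [LieRingModule L M] [LieModule k L M]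
    [FiniteDimensional k L] [FiniteDimensional k M]
    (σ : L)
    (hL : Submodule.span k {y : L | ∃ c : k, ⁅σ, y⁆ = c • y} = ⊤)
    (F : L →ₗ[k] M)
    (hcocycle : ∀ a b : L, ⁅a, F b⁆ - ⁅b, F a⁆ - F ⁅a, b⁆ = 0)
    (hF : ∀ (a : L) (c : k), ⁅σ, a⁆ = c • a → ⁅σ, F a⁆ = (c + 0) • F a) :
    ∀ a : L, ⁅a, F σ⁆ = 0 := by
  intro a
  have ha : a ∈ Submodule.span k {y : L | ∃ c : k, ⁅σ, y⁆ = c • y} := by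
    rw [hL]; trivial
  induction ha using Submodule.span_induction with
  | mem x hx =>
    obtain ⟨c, hc⟩ := hx
    have h1 := hcocycle σ x
    have h2 := hF x c hc
    rw [hc, map_smul, h2, add_zero] at h1
    have h3 : -⁅x, F σ⁆ = 0 := by rw [← h1]; abel
    simpa using h3
  | zero => simp
  | add x y _ _ hx hy => rw [add_lie, hx, hy, add_zero]
  | smul c x _ hx => rw [smul_lie, hx, smul_zero]
end

section
/- Let k be a field whose characteristic p is zero or greater than N, let b be the Borel subalgebra of upper triangular matrices in sl(N, k), and h ⊂ b the Cartan subalgebra of diagonal matrices. Then every multidegree-zero n-cochain F : b^n → k (trivial coefficients) is a cocycle: (δF)(a_0, …, a_n) = Σ_{0≤i<j≤n} (−1)^{i+j} F([a_i, a_j], a_0, …, â_i, …, â_j, …, a_n) = 0 for all a_0, …, a_n ∈ b. In particular, every multidegree-zero coboundary is zero. -/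
/- STATEMENT 11: every multidegree-zero cochain of the Borel subalgebra of sl(N,k) with
trivial coefficients is a cocycle, and every multidegree-zero coboundary is zero, provided
the characteristic of k is zero or greater than N. -/

attribute [local instance 100] LieRing.ofAssociativeRing

variable (N : ℕ) (k : Type*) [Field k]

/-- The Borel subalgebra of `sl(N, k)`: the Lie subalgebra of `Matrix (Fin N) (Fin N) k`
consisting of upper triangular matrices of trace zero. -/
def slBorel : LieSubalgebra k (Matrix (Fin N) (Fin N) k) where
  carrier := {A | Matrix.trace A = 0 ∧ ∀ i j : Fin N, j < i → A i j = 0}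
  add_mem' := by
    rintro A B ⟨hA1, hA2⟩ ⟨hB1, hB2⟩
    refine ⟨?_, fun i j h => ?_⟩
    · simp [Matrix.trace_add, hA1, hB1]
    · simp [Matrix.add_apply, hA2 i j h, hB2 i j h]
  zero_mem' := ⟨Matrix.trace_zero _ _, fun _ _ _ => rfl⟩
  smul_mem' := by
    rintro c A ⟨hA1, hA2⟩
    refine ⟨?_, fun i j h => ?_⟩
    · simp [Matrix.trace_smul, hA1]
    · simp [Matrix.smul_apply, hA2 i j h]
  lie_mem' := by
    rintro A B ⟨hA1, hA2⟩ ⟨hB1, hB2⟩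
    refine ⟨?_, fun i j h => ?_⟩
    · simp [Ring.lie_def, Matrix.trace_sub, Matrix.trace_mul_comm A B]
    · have h1 : ∑ l, A i l * B l j = 0 :=
        Finset.sum_eq_zero fun l _ => by
          rcases lt_or_ge l i with hl | hl
          · rw [hA2 i l hl, zero_mul]
          · rw [hB2 l j (lt_of_lt_of_le h hl), mul_zero]
      have h2 : ∑ l, B i l * A l j = 0 :=
        Finset.sum_eq_zero fun l _ => by
          rcases lt_or_ge l i with hl | hl
          · rw [hB2 i l hl, zero_mul]
          · rw [hA2 l j (lt_of_lt_of_le h hl), mul_zero]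
      simp [Ring.lie_def, Matrix.sub_apply, Matrix.mul_apply, h1, h2]

/-- The Cartan subalgebra of `sl(N, k)`: diagonal matrices of trace zero. -/
def slCartan : Submodule k (Matrix (Fin N) (Fin N) k) where
  carrier := {A | Matrix.trace A = 0 ∧ ∀ i j : Fin N, i ≠ j → A i j = 0}
  add_mem' := by
    rintro A B ⟨hA1, hA2⟩ ⟨hB1, hB2⟩
    exact ⟨by simp [Matrix.trace_add, hA1, hB1],
      fun i j h => by simp [Matrix.add_apply, hA2 i j h, hB2 i j h]⟩
  zero_mem' := ⟨Matrix.trace_zero _ _, fun _ _ _ => rfl⟩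
  smul_mem' := by
    rintro c A ⟨hA1, hA2⟩
    exact ⟨by simp [Matrix.trace_smul, hA1],
      fun i j h => by simp [Matrix.smul_apply, hA2 i j h]⟩

/-- The slNilradical of the Borel subalgebra: strictly upper triangular matrices. -/
def slNilrad : Submodule k (Matrix (Fin N) (Fin N) k) where
  carrier := {A | ∀ i j : Fin N, j ≤ i → A i j = 0}
  add_mem' := by
    rintro A B hA hB
    exact fun i j h => by simp [Matrix.add_apply, hA i j h, hB i j h]
  zero_mem' := fun _ _ _ => rfl
  smul_mem' := by
    rintro c A hA
    exact fun i j h => by simp [Matrix.smul_apply, hA i j h]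

/-- An `n`-cochain of the Borel subalgebra with trivial coefficients `k` is multidegree-zero
if it vanishes on every tuple of simultaneous `ad h`-eigenvectors (for all `h` in the Cartan
subalgebra) whose weights `α₁, …, αₙ ∈ h*` do not sum to zero. -/
def MultidegZero {n : ℕ} (F : AlternatingMap k (↥(slBorel N k)) k (Fin n)) : Prop :=
  ∀ (a : Fin n → ↥(slBorel N k)) (α : Fin n → (↥(slCartan N k) →ₗ[k] k)),
    (∀ (i : Fin n) (x : ↥(slCartan N k)),
        ⁅(x : Matrix (Fin N) (Fin N) k), (a i : Matrix (Fin N) (Fin N) k)⁆ =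
          α i x • (a i : Matrix (Fin N) (Fin N) k)) →
    (∑ i, α i) ≠ 0 → F a = 0

section

variable {N : ℕ} {k : Type*} [Field k]

/-- The Chevalley–Eilenberg coboundary with trivial coefficients `k`:
`(δF)(a₀,…,aₙ) = ∑_{i<j} (−1)^{i+j} F(⁅aᵢ,aⱼ⁆, a₀,…,âᵢ,…,âⱼ,…,aₙ)`.
The pair `i < j` is encoded as `(i, i.succAbove j)` with `(i : ℕ) ≤ (j : ℕ)`, so the
actual second index is `j + 1` and the sign is `(−1)^{i+j+1}`. -/
def trivCoboundary :
    ∀ {n : ℕ}, ((Fin n → ↥(slBorel N k)) → k) → (Fin (n + 1) → ↥(slBorel N k)) → k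
  | 0, _ => fun _ => 0
  | m + 1, F => fun a =>
      ∑ i : Fin (m + 2), ∑ j : Fin (m + 1),
        if (i : ℕ) ≤ (j : ℕ) then
          ((-1 : ℤ) ^ ((i : ℕ) + (j : ℕ) + 1)) •
            F (Fin.cons ⁅a i, a (i.succAbove j)⁆ ((a ∘ i.succAbove) ∘ j.succAbove))
        else 0

end

section Aux

variable {N : ℕ} {k : Type*} [Field k]

/-- index type for basic components: `none` = diagonal part, `some ⟨(p,q),_⟩` = `E_{pq}` part. -/
abbrev IdxC (N : ℕ) := Option {pq : Fin N × Fin N // pq.1 < pq.2}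

/-- weight functional attached to a component index. -/
def wtOf (N : ℕ) (k : Type*) [Field k] (t : IdxC N) : (↥(slCartan N k) →ₗ[k] k) :=
  match t with
  | none => 0
  | some s =>
    { toFun := fun x => (x : Matrix (Fin N) (Fin N) k) s.1.1 s.1.1
        - (x : Matrix (Fin N) (Fin N) k) s.1.2 s.1.2
      map_add' := fun x y => by simp [Matrix.add_apply]; ring
      map_smul' := fun c x => by simp [Matrix.smul_apply]; ring }

/-- `x` is a basic vector of type `t`. -/
def IsComp (t : IdxC N) (x : ↥(slBorel N k)) : Prop :=
  match t with
  | none => ∀ i j : Fin N, i ≠ j → (x : Matrix (Fin N) (Fin N) k) i j = 0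
  | some s => ∃ c : k,
      (x : Matrix (Fin N) (Fin N) k) = c • Matrix.single s.1.1 s.1.2 1

lemma stdBasis_mem (p q : Fin N) (h : p < q) (c : k) :
    c • Matrix.single p q (1:k) ∈ slBorel N k := by
  constructor
  · rw [Matrix.trace_smul, Matrix.trace]
    have : ∀ i : Fin N, Matrix.diag (Matrix.single p q (1:k)) i = 0 := by
      intro i
      simp only [Matrix.diag_apply, Matrix.single, Matrix.of_apply]
      rw [if_neg]
      rintro ⟨rfl, rfl⟩; exact absurd h (lt_irrefl _)
    rw [Finset.sum_congr rfl fun i _ => this i]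
    simp
  · intro i j hji
    simp only [Matrix.smul_apply, Matrix.single, Matrix.of_apply]
    rw [if_neg, smul_zero]
    rintro ⟨rfl, rfl⟩; exact absurd (h.trans hji) (lt_irrefl _)

lemma diag_mem (x : ↥(slBorel N k)) :
    Matrix.diagonal (fun i => (x : Matrix (Fin N) (Fin N) k) i i) ∈ slBorel N k := by
  constructor
  · rw [Matrix.trace_diagonal]
    exact x.2.1
  · intro i j hji
    exact Matrix.diagonal_apply_ne _ (fun h => (ne_of_lt hji) h.symm)

/-- the components of an element of the Borel subalgebra. -/
def compo (x : ↥(slBorel N k)) (t : IdxC N) : ↥(slBorel N k) :=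
  match t with
  | none => ⟨Matrix.diagonal (fun i => (x : Matrix (Fin N) (Fin N) k) i i), diag_mem x⟩
  | some s => ⟨((x : Matrix (Fin N) (Fin N) k) s.1.1 s.1.2) • Matrix.single s.1.1 s.1.2 1,
      stdBasis_mem s.1.1 s.1.2 s.2 _⟩

lemma isComp_compo (x : ↥(slBorel N k)) (t : IdxC N) : IsComp t (compo x t) := by
  match t with
  | none =>
    intro i j hij
    exact Matrix.diagonal_apply_ne _ hij
  | some s => exact ⟨_, rfl⟩

lemma sum_compo (x : ↥(slBorel N k)) : ∑ t : IdxC N, compo x t = x := by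
  apply Subtype.ext
  have hcoe : ((∑ t : IdxC N, compo x t : ↥(slBorel N k)) : Matrix (Fin N) (Fin N) k)
      = ∑ t : IdxC N, ((compo x t : ↥(slBorel N k)) : Matrix (Fin N) (Fin N) k) :=
    AddSubmonoidClass.coe_finset_sum _ _
  rw [hcoe, Fintype.sum_option]
  ext i j
  simp only [Matrix.add_apply, Matrix.sum_apply, compo]
  rcases eq_or_ne i j with rfl | hij
  · rw [Matrix.diagonal_apply_eq]
    have : ∀ s : {pq : Fin N × Fin N // pq.1 < pq.2},
        (((x : Matrix (Fin N) (Fin N) k) s.1.1 s.1.2) •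
          Matrix.single s.1.1 s.1.2 (1:k)) i i = 0 := by
      intro s
      simp only [Matrix.smul_apply, Matrix.single, Matrix.of_apply]
      rw [if_neg, smul_zero]
      rintro ⟨rfl, h2⟩; exact absurd (h2 ▸ s.2) (lt_irrefl _)
    rw [Finset.sum_congr rfl fun s _ => this s]
    simp
  · rw [Matrix.diagonal_apply_ne _ hij, zero_add]
    rcases lt_or_ge i j with hlt | hle
    · rw [Finset.sum_eq_single (⟨(i,j), hlt⟩ : {pq : Fin N × Fin N // pq.1 < pq.2})]
      · simp [Matrix.single]
      · intro s _ hs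
        simp only [Matrix.smul_apply, Matrix.single, Matrix.of_apply]
        rw [if_neg, smul_zero]
        rintro ⟨rfl, rfl⟩
        exact hs (by ext <;> rfl)
      · intro h; exact absurd (Finset.mem_univ _) h
    · have hx : (x : Matrix (Fin N) (Fin N) k) i j = 0 :=
        x.2.2 i j (lt_of_le_of_ne hle hij.symm)
      rw [hx]
      apply Finset.sum_eq_zero
      intro s _
      simp only [Matrix.smul_apply, Matrix.single, Matrix.of_apply]
      rw [if_neg, smul_zero]
      rintro ⟨rfl, rfl⟩
      exact absurd s.2 (not_lt_of_ge hle)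

end Aux

section Aux2

variable {N : ℕ} {k : Type*} [Field k]

lemma cartan_diag (y : ↥(slCartan N k)) :
    (y : Matrix (Fin N) (Fin N) k)
      = Matrix.diagonal (fun i => (y : Matrix (Fin N) (Fin N) k) i i) := by
  ext i j
  rcases eq_or_ne i j with rfl | hij
  · rw [Matrix.diagonal_apply_eq]
  · rw [Matrix.diagonal_apply_ne _ hij, y.2.2 i j hij]

lemma isComp_none_diag {x : ↥(slBorel N k)} (h : IsComp none x) :
    (x : Matrix (Fin N) (Fin N) k)
      = Matrix.diagonal (fun i => (x : Matrix (Fin N) (Fin N) k) i i) := by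
  ext i j
  rcases eq_or_ne i j with rfl | hij
  · rw [Matrix.diagonal_apply_eq]
  · rw [Matrix.diagonal_apply_ne _ hij, h i j hij]

lemma diag_lie_stdBasis (d : Fin N → k) (p q : Fin N) (c : k) :
    ⁅Matrix.diagonal d, c • Matrix.single p q (1:k)⁆
      = (d p - d q) • (c • Matrix.single p q (1:k)) := by
  rw [Ring.lie_def]
  ext i j
  rw [Matrix.sub_apply, Matrix.diagonal_mul, Matrix.mul_diagonal]
  simp only [Matrix.smul_apply, Matrix.single, Matrix.of_apply, smul_eq_mul]
  by_cases hp : p = i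
  · by_cases hq : q = j
    · subst hp; subst hq; simp; ring
    · simp [hq]
  · simp [hp]

lemma isComp_eigen {t : IdxC N} {x : ↥(slBorel N k)} (h : IsComp t x) (y : ↥(slCartan N k)) :
    ⁅(y : Matrix (Fin N) (Fin N) k), (x : Matrix (Fin N) (Fin N) k)⁆
      = wtOf N k t y • (x : Matrix (Fin N) (Fin N) k) := by
  match t with
  | none =>
    rw [Ring.lie_def, cartan_diag y, isComp_none_diag h, Matrix.diagonal_mul_diagonal,
      Matrix.diagonal_mul_diagonal]
    have : (fun i => (y : Matrix (Fin N) (Fin N) k) i i * (x : Matrix (Fin N) (Fin N) k) i i)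
        = fun i => (x : Matrix (Fin N) (Fin N) k) i i * (y : Matrix (Fin N) (Fin N) k) i i := by
      funext i; ring
    rw [this, sub_self]
    show (0 : Matrix (Fin N) (Fin N) k) = (0 : k) • _
    rw [zero_smul]
  | some s =>
    obtain ⟨c, hc⟩ := h
    rw [hc, cartan_diag y, diag_lie_stdBasis]
    rfl

end Aux2

section Aux3

variable {N : ℕ} {k : Type*} [Field k]

lemma brk {u v : IdxC N} {x y : ↥(slBorel N k)} (hx : IsComp u x) (hy : IsComp v y) :
    ⁅x, y⁆ = 0 ∨ ∃ s : {pq : Fin N × Fin N // pq.1 < pq.2},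
      IsComp (some s) ⁅x, y⁆ ∧ wtOf N k (some s) = wtOf N k u + wtOf N k v := by
  have hco : ((⁅x, y⁆ : ↥(slBorel N k)) : Matrix (Fin N) (Fin N) k)
      = ⁅(x : Matrix (Fin N) (Fin N) k), (y : Matrix (Fin N) (Fin N) k)⁆ :=
    LieSubalgebra.coe_bracket _ x y
  match u, v with
  | none, none =>
    left
    apply Subtype.ext
    rw [hco, Ring.lie_def, isComp_none_diag hx, isComp_none_diag hy,
      Matrix.diagonal_mul_diagonal, Matrix.diagonal_mul_diagonal]
    have : (fun i => (x : Matrix (Fin N) (Fin N) k) i i * (y : Matrix (Fin N) (Fin N) k) i i)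
        = fun i => (y : Matrix (Fin N) (Fin N) k) i i * (x : Matrix (Fin N) (Fin N) k) i i := by
      funext i; ring
    rw [this, sub_self]
    rfl
  | none, some s =>
    right
    obtain ⟨c, hc⟩ := hy
    refine ⟨s, ⟨((x : Matrix (Fin N) (Fin N) k) s.1.1 s.1.1
        - (x : Matrix (Fin N) (Fin N) k) s.1.2 s.1.2) * c, ?_⟩, (zero_add _).symm⟩
    rw [hco, hc, isComp_none_diag hx, diag_lie_stdBasis, smul_smul]
    simp [Matrix.diagonal_apply_eq]
  | some s, none =>
    right
    obtain ⟨c, hc⟩ := hx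
    refine ⟨s, ⟨-(((y : Matrix (Fin N) (Fin N) k) s.1.1 s.1.1
        - (y : Matrix (Fin N) (Fin N) k) s.1.2 s.1.2) * c), ?_⟩, (add_zero _).symm⟩
    rw [hco, ← lie_skew, hc, isComp_none_diag hy, diag_lie_stdBasis, smul_smul, neg_smul]
    simp [Matrix.diagonal_apply_eq]
  | some s, some s' =>
    obtain ⟨c, hc⟩ := hx
    obtain ⟨c', hc'⟩ := hy
    rw [hc, hc', Ring.lie_def, smul_mul_smul_comm, smul_mul_smul_comm] at hco
    by_cases hqr : s.1.2 = s'.1.1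
    · have hps : s.1.1 < s'.1.2 := lt_trans (hqr ▸ s.2) s'.2
      have htp : s'.1.2 ≠ s.1.1 := fun h => absurd (h ▸ hps) (lt_irrefl _)
      right
      refine ⟨⟨(s.1.1, s'.1.2), hps⟩, ⟨c * c', ?_⟩, ?_⟩
      · rw [hco, Matrix.single_mul_single_of_ne (h := htp), smul_zero, sub_zero, hqr,
          Matrix.single_mul_single_same, one_mul]
      · apply LinearMap.ext
        intro z
        simp only [wtOf, LinearMap.add_apply, LinearMap.coe_mk, AddHom.coe_mk]
        rw [hqr]
        ring
    · by_cases htp : s'.1.2 = s.1.1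
      · have hrq : s'.1.1 < s.1.2 := lt_trans (htp ▸ s'.2) s.2
        right
        refine ⟨⟨(s'.1.1, s.1.2), hrq⟩, ⟨-(c' * c), ?_⟩, ?_⟩
        · rw [hco, Matrix.single_mul_single_of_ne (h := hqr), smul_zero, zero_sub, htp,
            Matrix.single_mul_single_same, one_mul, neg_smul]
        · apply LinearMap.ext
          intro z
          simp only [wtOf, LinearMap.add_apply, LinearMap.coe_mk, AddHom.coe_mk]
          rw [htp]
          ring
      · left
        apply Subtype.ext
        rw [hco, Matrix.single_mul_single_of_ne (h := hqr), Matrix.single_mul_single_of_ne (h := htp),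
          smul_zero, smul_zero, sub_zero]
        rfl

end Aux3

section Aux4

variable {N : ℕ} {k : Type*} [Field k]

lemma Ncast_ne_zero (hN : 2 ≤ N) (hchar : ringChar k = 0 ∨ N < ringChar k) :
    (N : k) ≠ 0 := by
  intro h
  have hdvd : ringChar k ∣ N := (CharP.cast_eq_zero_iff k (ringChar k) N).mp h
  rcases hchar with h0 | hlt
  · rw [h0, zero_dvd_iff] at hdvd
    omega
  · have := Nat.le_of_dvd (by omega) hdvd
    omega

lemma pigeon {r : ℕ} (hN : 2 ≤ N) (hchar : ringChar k = 0 ∨ N < ringChar k)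
    (H : AlternatingMap k (↥(slBorel N k)) k (Fin r))
    (b : Fin r → ↥(slBorel N k)) (g : Fin r → IdxC N)
    (hcomp : ∀ l, IsComp (g l) (b l))
    (hsum : ∑ l, wtOf N k (g l) = 0)
    (l₀ : Fin r) (s₀ : {pq : Fin N × Fin N // pq.1 < pq.2}) (hl₀ : g l₀ = some s₀) :
    H b = 0 := by
  by_cases hz : ∃ l, b l = 0
  · obtain ⟨l, hl⟩ := hz
    exact H.map_coord_zero l hl
  push_neg at hz
  classical
  set fst : Fin r → Fin N := fun l => ((g l).getD s₀).1.1 with hfst_def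
  set snd : Fin r → Fin N := fun l => ((g l).getD s₀).1.2 with hsnd_def
  set A : Finset (Fin r) := Finset.univ.filter (fun l => (g l).isSome) with hA_def
  have hl₀A : l₀ ∈ A := by simp [hA_def, hl₀]
  have himg : (A.image fst).Nonempty := ⟨fst l₀, Finset.mem_image_of_mem _ hl₀A⟩
  set u : Fin N := (A.image fst).min' himg with hu_def
  have hu_le : ∀ l ∈ A, u ≤ fst l := fun l hl =>
    Finset.min'_le _ _ (Finset.mem_image_of_mem _ hl)
  obtain ⟨lstar, hlstarA, hlstar⟩ := Finset.mem_image.mp ((A.image fst).min'_mem himg)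
  -- the test element of the Cartan subalgebra
  have hXmem : Matrix.diagonal (fun i => if i = u then (N : k) - 1 else -1) ∈ slCartan N k := by
    constructor
    · rw [Matrix.trace_diagonal]
      have : ∀ i : Fin N, (if i = u then (N : k) - 1 else -1)
          = (if i = u then (N : k) else 0) - 1 := by
        intro i; by_cases h : i = u <;> simp [h]
      rw [Finset.sum_congr rfl fun i _ => this i, Finset.sum_sub_distrib,
        Finset.sum_ite_eq' Finset.univ u (fun _ => (N : k))]
      simp
    · intro i j hij
      exact Matrix.diagonal_apply_ne _ hij
  set X : ↥(slCartan N k) := ⟨_, hXmem⟩ with hX_def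
  have hXentry : ∀ i : Fin N, (X : Matrix (Fin N) (Fin N) k) i i
      = if i = u then (N : k) - 1 else -1 := by
    intro i
    show Matrix.diagonal _ i i = _
    rw [Matrix.diagonal_apply_eq]
  -- value of each weight on X
  have hval : ∀ l, wtOf N k (g l) X = if l ∈ A ∧ fst l = u then (N : k) else 0 := by
    intro l
    match hgl : g l with
    | none =>
      have hnA : l ∉ A := by simp [hA_def, hgl]
      rw [if_neg (fun hc => hnA hc.1)]
      rfl
    | some s =>
      have hlA : l ∈ A := by simp [hA_def, hgl]
      have hfst : fst l = s.1.1 := by rw [hfst_def]; simp [hgl]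
      have hq_ne : s.1.2 ≠ u := by
        intro h
        have h1 : u ≤ s.1.1 := hfst ▸ hu_le l hlA
        have h2 : s.1.1 < s.1.2 := s.2
        rw [h] at h2
        exact absurd (lt_of_le_of_lt h1 h2) (lt_irrefl u)
      show (X : Matrix (Fin N) (Fin N) k) s.1.1 s.1.1
          - (X : Matrix (Fin N) (Fin N) k) s.1.2 s.1.2 = _
      rw [hXentry, hXentry, if_neg hq_ne]
      by_cases h : s.1.1 = u <;> simp [h, hfst, hlA] <;> ring
  -- summing the weights against X
  have happ : ∑ l, wtOf N k (g l) X = 0 := by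
    have := congrArg (fun φ : (↥(slCartan N k) →ₗ[k] k) => φ X) hsum
    simpa using this
  rw [Finset.sum_congr rfl (fun l _ => hval l), ← Finset.sum_filter,
    Finset.sum_const, nsmul_eq_mul] at happ
  set S : Finset (Fin r) := Finset.univ.filter (fun l => l ∈ A ∧ fst l = u) with hS_def
  have hcard0 : ((S.card : k)) = 0 := by
    rcases mul_eq_zero.mp happ with h | h
    · exact h
    · exact absurd h (Ncast_ne_zero hN hchar)
  have hSpos : 0 < S.card := by
    apply Finset.card_pos.mpr
    exact ⟨lstar, by simp [hS_def, hlstarA, hlstar, hu_def]⟩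
  have hdvd : ringChar k ∣ S.card := by
    haveI := ringChar.charP k
    exact (CharP.cast_eq_zero_iff k (ringChar k) _).mp hcard0
  have hcardN : N < S.card := by
    rcases hchar with h0 | hlt
    · rw [h0, zero_dvd_iff] at hdvd
      omega
    · exact lt_of_lt_of_le hlt (Nat.le_of_dvd hSpos hdvd)
  -- pigeonhole on second indices
  have hmaps : ∀ l ∈ S, snd l ∈ (Finset.univ : Finset (Fin N)) := fun l _ => Finset.mem_univ _
  obtain ⟨l, hlS, l', hl'S, hnell', heq⟩ :=
    Finset.exists_ne_map_eq_of_card_lt_of_maps_to (by simpa using hcardN) hmaps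
  -- both slots carry the same tag
  have hSmem : ∀ m ∈ S, ∃ s : {pq : Fin N × Fin N // pq.1 < pq.2},
      g m = some s ∧ s.1.1 = u ∧ s.1.2 = snd m := by
    intro m hm
    have hm' : m ∈ A ∧ fst m = u := by simpa [hS_def] using hm
    obtain ⟨s, hs⟩ := Option.isSome_iff_exists.mp (by simpa [hA_def] using hm'.1)
    refine ⟨s, hs, ?_, ?_⟩
    · have := hm'.2
      rw [hfst_def] at this
      simpa [hs] using this
    · rw [hsnd_def]; simp [hs]
  obtain ⟨s, hgs, hs1, hs2⟩ := hSmem l hlS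
  obtain ⟨s', hgs', hs1', hs2'⟩ := hSmem l' hl'S
  have hss' : s = s' := by
    apply Subtype.ext
    apply Prod.ext
    · rw [hs1, hs1']
    · rw [hs2, hs2', heq]
  -- now both b l and b l' are multiples of the same elementary matrix
  have hc : IsComp (some s) (b l) := hgs ▸ hcomp l
  have hc' : IsComp (some s) (b l') := by rw [hss']; exact hgs' ▸ hcomp l'
  obtain ⟨c, hcm⟩ := hc
  obtain ⟨c', hcm'⟩ := hc'
  have hcne : c ≠ 0 := by
    intro h
    apply hz l
    apply Subtype.ext
    rw [hcm, h, zero_smul]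
    rfl
  have hprop : b l' = (c' / c) • b l := by
    apply Subtype.ext
    have hsm : (((c' / c) • b l : ↥(slBorel N k)) : Matrix (Fin N) (Fin N) k)
        = (c' / c) • ((b l : ↥(slBorel N k)) : Matrix (Fin N) (Fin N) k) := rfl
    rw [hsm, hcm, hcm', smul_smul, div_mul_cancel₀ _ hcne]
  have hbu : b = Function.update b l' ((c' / c) • b l) := by
    rw [← hprop]
    exact (Function.update_eq_self _ _).symm
  rw [hbu, AlternatingMap.map_update_smul, AlternatingMap.map_update_self _ _ hnell'.symm,
    smul_zero]

end Aux4

section Aux5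

variable {N : ℕ} {k : Type*} [Field k]

lemma sum_wt_split {m : ℕ} (g : Fin (m+2) → IdxC N) (i : Fin (m+2)) (j : Fin (m+1)) :
    ∑ l : Fin (m+2), wtOf N k (g l)
      = (wtOf N k (g i) + wtOf N k (g (i.succAbove j)))
        + ∑ l : Fin m, wtOf N k (g (i.succAbove (j.succAbove l))) := by
  rw [Fin.sum_univ_succAbove (fun l => wtOf N k (g l)) i,
    Fin.sum_univ_succAbove (fun l => wtOf N k (g (i.succAbove l))) j, add_assoc]

lemma term_zero {m : ℕ} (hN : 2 ≤ N) (hchar : ringChar k = 0 ∨ N < ringChar k)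
    (H : AlternatingMap k (↥(slBorel N k)) k (Fin (m+1)))
    (t : Fin (m+2) → ↥(slBorel N k)) (g : Fin (m+2) → IdxC N)
    (hcomp : ∀ l, IsComp (g l) (t l))
    (hsum : ∑ l, wtOf N k (g l) = 0)
    (i : Fin (m+2)) (j : Fin (m+1)) :
    H (Fin.cons ⁅t i, t (i.succAbove j)⁆ ((t ∘ i.succAbove) ∘ j.succAbove)) = 0 := by
  rcases brk (hcomp i) (hcomp (i.succAbove j)) with hz | ⟨s, hcs, hws⟩
  · exact H.map_coord_zero 0 (by rw [Fin.cons_zero]; exact hz)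
  · set gb : Fin (m+1) → IdxC N :=
      Fin.cons (some s) (fun l => g (i.succAbove (j.succAbove l))) with hgb_def
    have hcomp' : ∀ l, IsComp (gb l)
        ((Fin.cons ⁅t i, t (i.succAbove j)⁆ ((t ∘ i.succAbove) ∘ j.succAbove)
          : Fin (m+1) → ↥(slBorel N k)) l) := by
      intro l
      induction l using Fin.cases with
      | zero =>
        rw [hgb_def, Fin.cons_zero, Fin.cons_zero]
        exact hcs
      | succ l' =>
        rw [hgb_def, Fin.cons_succ, Fin.cons_succ]
        exact hcomp _
    have hsum' : ∑ l : Fin (m+1), wtOf N k (gb l) = 0 := by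
      rw [hgb_def, Fin.sum_univ_succ]
      simp only [Fin.cons_zero, Fin.cons_succ]
      rw [hws, ← sum_wt_split g i j]
      exact hsum
    exact pigeon hN hchar H _ gb hcomp' hsum' 0 s (by rw [hgb_def, Fin.cons_zero])

lemma term_ne {m : ℕ}
    (F : AlternatingMap k (↥(slBorel N k)) k (Fin (m+1))) (hF : MultidegZero N k F)
    (t : Fin (m+2) → ↥(slBorel N k)) (g : Fin (m+2) → IdxC N)
    (hcomp : ∀ l, IsComp (g l) (t l))
    (hsum : ∑ l, wtOf N k (g l) ≠ 0)
    (i : Fin (m+2)) (j : Fin (m+1)) :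
    F (Fin.cons ⁅t i, t (i.succAbove j)⁆ ((t ∘ i.succAbove) ∘ j.succAbove)) = 0 := by
  apply hF _ (Fin.cons (wtOf N k (g i) + wtOf N k (g (i.succAbove j)))
      (fun l => wtOf N k (g (i.succAbove (j.succAbove l)))))
  · intro l x
    induction l using Fin.cases with
    | zero =>
      rw [Fin.cons_zero, Fin.cons_zero]
      have hbr : ((⁅t i, t (i.succAbove j)⁆ : ↥(slBorel N k)) : Matrix (Fin N) (Fin N) k)
          = ⁅((t i : ↥(slBorel N k)) : Matrix (Fin N) (Fin N) k),
             ((t (i.succAbove j) : ↥(slBorel N k)) : Matrix (Fin N) (Fin N) k)⁆ :=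
        LieSubalgebra.coe_bracket _ _ _
      have hlsm : ∀ (c : k) (A B : Matrix (Fin N) (Fin N) k), ⁅A, c • B⁆ = c • ⁅A, B⁆ := by
        intro c A B
        rw [Ring.lie_def, Ring.lie_def, Matrix.mul_smul, Matrix.smul_mul, smul_sub]
      rw [hbr, leibniz_lie, isComp_eigen (hcomp i) x, isComp_eigen (hcomp (i.succAbove j)) x,
        smul_lie, hlsm, LinearMap.add_apply, add_smul]
    | succ l' =>
      rw [Fin.cons_succ, Fin.cons_succ]
      exact isComp_eigen (hcomp _) x
  · rw [Fin.sum_cons, ← sum_wt_split g i j]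
    exact hsum

end Aux5

section Aux6

variable {N : ℕ} {k : Type*} [Field k] {m : ℕ}

/-- arguments of one term of the coboundary. -/
def termArgs (a : Fin (m+2) → ↥(slBorel N k)) (i : Fin (m+2)) (j : Fin (m+1)) :
    Fin (m+1) → ↥(slBorel N k) :=
  Fin.cons ⁅a i, a (i.succAbove j)⁆ ((a ∘ i.succAbove) ∘ j.succAbove)

variable [DecidableEq (Fin (m+2))]

lemma TA1 (a : Fin (m+2) → ↥(slBorel N k)) (i : Fin (m+2)) (j : Fin (m+1))
    (z : ↥(slBorel N k)) :
    termArgs (Function.update a i z) i j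
      = Fin.cons ⁅z, a (i.succAbove j)⁆ ((a ∘ i.succAbove) ∘ j.succAbove) := by
  funext l
  induction l using Fin.cases with
  | zero =>
    show ⁅Function.update a i z i, Function.update a i z (i.succAbove j)⁆ = _
    rw [Function.update_self, Function.update_of_ne (Fin.succAbove_ne i j), Fin.cons_zero]
  | succ l' =>
    show Function.update a i z (i.succAbove (j.succAbove l')) = _
    rw [Function.update_of_ne (Fin.succAbove_ne i _), Fin.cons_succ]
    rfl

lemma TA2 (a : Fin (m+2) → ↥(slBorel N k)) (i : Fin (m+2)) (j : Fin (m+1))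
    (z : ↥(slBorel N k)) :
    termArgs (Function.update a (i.succAbove j) z) i j
      = Fin.cons ⁅a i, z⁆ ((a ∘ i.succAbove) ∘ j.succAbove) := by
  funext l
  induction l using Fin.cases with
  | zero =>
    show ⁅Function.update a (i.succAbove j) z i,
        Function.update a (i.succAbove j) z (i.succAbove j)⁆ = _
    rw [Function.update_self, Function.update_of_ne (Fin.succAbove_ne i j).symm, Fin.cons_zero]
  | succ l' =>
    show Function.update a (i.succAbove j) z (i.succAbove (j.succAbove l')) = _
    rw [Function.update_of_ne
      (fun h => Fin.succAbove_ne j l' (Fin.succAbove_right_injective h)), Fin.cons_succ]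
    rfl

lemma TA3 (a : Fin (m+2) → ↥(slBorel N k)) (i : Fin (m+2)) (j : Fin (m+1)) (j₀ : Fin m)
    (z : ↥(slBorel N k)) :
    termArgs (Function.update a (i.succAbove (j.succAbove j₀)) z) i j
      = Function.update (termArgs a i j) j₀.succ z := by
  funext l
  induction l using Fin.cases with
  | zero =>
    rw [Function.update_of_ne (Fin.succ_ne_zero j₀).symm]
    show ⁅Function.update a (i.succAbove (j.succAbove j₀)) z i,
        Function.update a (i.succAbove (j.succAbove j₀)) z (i.succAbove j)⁆ = _
    rw [Function.update_of_ne (Fin.succAbove_ne i _).symm,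
      Function.update_of_ne
        (fun h => Fin.succAbove_ne j j₀ (Fin.succAbove_right_injective h).symm)]
    rfl
  | succ l' =>
    show Function.update a (i.succAbove (j.succAbove j₀)) z (i.succAbove (j.succAbove l')) = _
    by_cases h : l' = j₀
    · subst h
      rw [Function.update_self, Function.update_self]
    · rw [Function.update_of_ne (fun hh => h (Fin.succAbove_right_injective
        (Fin.succAbove_right_injective hh))),
        Function.update_of_ne (fun hh => h (Fin.succ_injective _ hh))]
      simp only [termArgs, Fin.cons_succ, Function.comp_apply]

lemma termF_add (F : AlternatingMap k (↥(slBorel N k)) k (Fin (m+1)))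
    (a : Fin (m+2) → ↥(slBorel N k)) (l : Fin (m+2)) (x y : ↥(slBorel N k))
    (i : Fin (m+2)) (j : Fin (m+1)) :
    F (termArgs (Function.update a l (x + y)) i j)
      = F (termArgs (Function.update a l x) i j)
        + F (termArgs (Function.update a l y) i j) := by
  have cons0_add : ∀ (T : Fin m → ↥(slBorel N k)) (u v : ↥(slBorel N k)),
      F (Fin.cons (u + v) T) = F (Fin.cons u T) + F (Fin.cons v T) := by
    intro T u v
    have h := F.map_update_add (Fin.cons 0 T) 0 u v
    rwa [Fin.update_cons_zero, Fin.update_cons_zero, Fin.update_cons_zero] at h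
  by_cases h1 : l = i
  · subst h1
    rw [TA1, TA1, TA1, add_lie]
    exact cons0_add _ _ _
  · by_cases h2 : l = i.succAbove j
    · subst h2
      rw [TA2, TA2, TA2, lie_add]
      exact cons0_add _ _ _
    · obtain ⟨l1, hl1⟩ := Fin.exists_succAbove_eq (Ne.symm h1).symm
      have hl1j : l1 ≠ j := fun h => h2 (by rw [← hl1, h])
      obtain ⟨j₀, hj₀⟩ := Fin.exists_succAbove_eq (Ne.symm hl1j).symm
      have hl : l = i.succAbove (j.succAbove j₀) := by rw [hj₀, hl1]
      rw [hl, TA3, TA3, TA3]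
      exact F.map_update_add _ _ _ _

lemma termF_smul (F : AlternatingMap k (↥(slBorel N k)) k (Fin (m+1)))
    (a : Fin (m+2) → ↥(slBorel N k)) (l : Fin (m+2)) (c : k) (x : ↥(slBorel N k))
    (i : Fin (m+2)) (j : Fin (m+1)) :
    F (termArgs (Function.update a l (c • x)) i j)
      = c • F (termArgs (Function.update a l x) i j) := by
  have cons0_smul : ∀ (T : Fin m → ↥(slBorel N k)) (u : ↥(slBorel N k)),
      F (Fin.cons (c • u) T) = c • F (Fin.cons u T) := by
    intro T u
    have h := F.map_update_smul (Fin.cons 0 T) 0 c u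
    rwa [Fin.update_cons_zero, Fin.update_cons_zero] at h
  by_cases h1 : l = i
  · subst h1
    rw [TA1, TA1, smul_lie]
    exact cons0_smul _ _
  · by_cases h2 : l = i.succAbove j
    · subst h2
      rw [TA2, TA2, lie_smul]
      exact cons0_smul _ _
    · obtain ⟨l1, hl1⟩ := Fin.exists_succAbove_eq (Ne.symm h1).symm
      have hl1j : l1 ≠ j := fun h => h2 (by rw [← hl1, h])
      obtain ⟨j₀, hj₀⟩ := Fin.exists_succAbove_eq (Ne.symm hl1j).symm
      have hl : l = i.succAbove (j.succAbove j₀) := by rw [hj₀, hl1]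
      rw [hl, TA3, TA3]
      exact F.map_update_smul _ _ _ _

end Aux6

section Aux7

variable {N : ℕ} {k : Type*} [Field k] {m : ℕ}

/-- The coboundary as a multilinear map. -/
def cobML (F : AlternatingMap k (↥(slBorel N k)) k (Fin (m+1))) :
    MultilinearMap k (fun _ : Fin (m+2) => ↥(slBorel N k)) k where
  toFun a := ∑ i : Fin (m+2), ∑ j : Fin (m+1),
    if (i : ℕ) ≤ (j : ℕ) then
      ((-1 : ℤ) ^ ((i : ℕ) + (j : ℕ) + 1)) • F (termArgs a i j)
    else 0
  map_update_add' := by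
    intro dec a l x y
    have hdec : dec = instDecidableEqFin (m+2) := Subsingleton.elim _ _
    subst hdec
    rw [← Finset.sum_add_distrib]
    refine Finset.sum_congr rfl fun i _ => ?_
    rw [← Finset.sum_add_distrib]
    refine Finset.sum_congr rfl fun j _ => ?_
    by_cases hij : (i : ℕ) ≤ (j : ℕ)
    · rw [if_pos hij, if_pos hij, if_pos hij, termF_add, smul_add]
    · rw [if_neg hij, if_neg hij, if_neg hij, add_zero]
  map_update_smul' := by
    intro dec a l c x
    have hdec : dec = instDecidableEqFin (m+2) := Subsingleton.elim _ _
    subst hdec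
    rw [Finset.smul_sum]
    refine Finset.sum_congr rfl fun i _ => ?_
    rw [Finset.smul_sum]
    refine Finset.sum_congr rfl fun j _ => ?_
    by_cases hij : (i : ℕ) ≤ (j : ℕ)
    · rw [if_pos hij, if_pos hij, termF_smul, smul_comm]
    · rw [if_neg hij, if_neg hij, smul_zero]

lemma cob_coe (F : AlternatingMap k (↥(slBorel N k)) k (Fin (m+1))) :
    trivCoboundary (N := N) (k := k) ⇑F = ⇑(cobML F) := rfl

/-- every term of the coboundary of a multidegree-zero cochain vanishes on basic tuples. -/
lemma cobML_basic (hN : 2 ≤ N) (hchar : ringChar k = 0 ∨ N < ringChar k)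
    (F : AlternatingMap k (↥(slBorel N k)) k (Fin (m+1))) (hF : MultidegZero N k F)
    (t : Fin (m+2) → ↥(slBorel N k)) (g : Fin (m+2) → IdxC N)
    (hcomp : ∀ l, IsComp (g l) (t l)) :
    cobML F t = 0 := by
  show (∑ i : Fin (m+2), ∑ j : Fin (m+1),
    if (i : ℕ) ≤ (j : ℕ) then
      ((-1 : ℤ) ^ ((i : ℕ) + (j : ℕ) + 1)) • F (termArgs t i j)
    else 0) = 0
  apply Finset.sum_eq_zero
  intro i _
  apply Finset.sum_eq_zero
  intro j _
  have hz : F (termArgs t i j) = 0 := by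
    by_cases hs : (∑ l, wtOf N k (g l)) = 0
    · have := term_zero hN hchar F t g hcomp hs i j
      simpa only [termArgs] using this
    · have := term_ne F hF t g hcomp hs i j
      simpa only [termArgs] using this
  rw [hz, smul_zero, ite_self]

/-- variant without the multidegree-zero hypothesis, when the total weight vanishes. -/
lemma cobML_basic' (hN : 2 ≤ N) (hchar : ringChar k = 0 ∨ N < ringChar k)
    (F : AlternatingMap k (↥(slBorel N k)) k (Fin (m+1)))
    (t : Fin (m+2) → ↥(slBorel N k)) (g : Fin (m+2) → IdxC N)
    (hcomp : ∀ l, IsComp (g l) (t l)) (hs : (∑ l, wtOf N k (g l)) = 0) :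
    cobML F t = 0 := by
  show (∑ i : Fin (m+2), ∑ j : Fin (m+1),
    if (i : ℕ) ≤ (j : ℕ) then
      ((-1 : ℤ) ^ ((i : ℕ) + (j : ℕ) + 1)) • F (termArgs t i j)
    else 0) = 0
  apply Finset.sum_eq_zero
  intro i _
  apply Finset.sum_eq_zero
  intro j _
  have hz : F (termArgs t i j) = 0 := by
    have := term_zero hN hchar F t g hcomp hs i j
    simpa only [termArgs] using this
  rw [hz, smul_zero, ite_self]

end Aux7

/-- If `char k = 0` or `char k > N`, every multidegree-zero `n`-cochain of the Borel
subalgebra (trivial coefficients) is a cocycle; in particular every multidegree-zero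
coboundary is zero. -/
theorem stmt11 (N : ℕ) (k : Type*) [Field k] (hN : 2 ≤ N)
    (hchar : ringChar k = 0 ∨ N < ringChar k) {n : ℕ} :
    (∀ F : AlternatingMap k (↥(slBorel N k)) k (Fin n),
      MultidegZero N k F → trivCoboundary ⇑F = 0) ∧
    (∀ (G : AlternatingMap k (↥(slBorel N k)) k (Fin n))
        (F : AlternatingMap k (↥(slBorel N k)) k (Fin (n + 1))),
      ⇑F = trivCoboundary ⇑G → MultidegZero N k F → F = 0) := by
  constructor
  · intro F hF
    cases n with
    | zero => funext a; rfl
    | succ m =>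
      funext a
      rw [cob_coe F]
      have h2 : (cobML F) a = (cobML F) (fun l => ∑ t : IdxC N, compo (a l) t) := by
        congr 1
        funext l
        rw [sum_compo]
      rw [Pi.zero_apply, h2, (cobML F).map_sum]
      apply Finset.sum_eq_zero
      intro f _
      exact cobML_basic hN hchar F hF _ f (fun l => isComp_compo (a l) (f l))
  · intro G F hFG hF
    cases n with
    | zero =>
      apply AlternatingMap.ext
      intro a
      rw [AlternatingMap.zero_apply, show F a = trivCoboundary ⇑G a from congrFun hFG a]
      rfl
    | succ m =>
      apply AlternatingMap.ext
      intro a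
      rw [AlternatingMap.zero_apply]
      have h2 : F a = F.toMultilinearMap (fun l => ∑ t : IdxC N, compo (a l) t) := by
        show F a = F (fun l => ∑ t : IdxC N, compo (a l) t)
        congr 1
        funext l
        rw [sum_compo]
      rw [h2, F.toMultilinearMap.map_sum]
      apply Finset.sum_eq_zero
      intro f _
      by_cases hs : (∑ l, wtOf N k (f l)) = 0
      · have he : F (fun l => compo (a l) (f l)) = trivCoboundary ⇑G (fun l => compo (a l) (f l)) :=
          congrFun hFG _
        show F (fun l => compo (a l) (f l)) = 0
        rw [he, cob_coe G]
        exact cobML_basic' hN hchar G _ f (fun l => isComp_compo (a l) (f l)) hs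
      · show F (fun l => compo (a l) (f l)) = 0
        apply hF _ (fun l => wtOf N k (f l))
        · intro l x
          exact isComp_eigen (isComp_compo (a l) (f l)) x
        · exact hs
end
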